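/- If f is a C¹ probability density on the circle whose derivative f' is Lipschitz, and 0 ≤ ε < 1, then the coupling map Φ_f is a C² diffeomorphism of the circle T. -/

import Mathlib

open MeasureTheory Function Set

/-- The sawtooth interaction function `g` on the circle, lifted 1-periodically to `ℝ`:
`g(u) = u` for `u ∈ (-1/2, 1/2)` and `g(±1/2) = 0`. -/
noncomputable def saw (u : ℝ) : ℝ :=
  if Int.fract (u + 1/2) = 0 then 0 else u - (round u : ℤ)

/-- The lift of the diffusive coupling map `Φ_f(x) = x + ε ∫ g(y-x) f(y) dy`. -/
noncomputable def Phi (ε : ℝ) (f : ℝ → ℝ) (x : ℝ) : ℝ :=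
  x + ε * ∫ y in (0:ℝ)..1, saw (y - x) * f y

/-- Property (F): `f` is a C¹ probability density on the circle (1-periodic on `ℝ`). -/
def PropF (f : ℝ → ℝ) : Prop :=
  ContDiff ℝ 1 f ∧ Function.Periodic f 1 ∧ (∀ x, 0 ≤ f x) ∧ (∫ x in (0:ℝ)..1, f x) = 1

/-- `f'` is Lipschitz. -/
def LipDeriv (f : ℝ → ℝ) : Prop := ∃ L : ℝ, ∀ x y, |deriv f x - deriv f y| ≤ L * |x - y|

/-- Total variation over one period, for C¹ functions. -/
noncomputable def tvar (f : ℝ → ℝ) : ℝ := ∫ x in (0:ℝ)..1, |deriv f x|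

/-- L¹ norm over one period. -/
noncomputable def l1 (f : ℝ → ℝ) : ℝ := ∫ x in (0:ℝ)..1, |f x|

/-- BV norm for C¹ functions. -/
noncomputable def bv (f : ℝ → ℝ) : ℝ := l1 f + tvar f

/-- Transfer (Perron–Frobenius) operator of an `N`-fold covering map given by its
(bijective, strictly monotone) lift `F : ℝ → ℝ`. -/
noncomputable def transfer (F : ℝ → ℝ) (N : ℕ) (u : ℝ → ℝ) (y : ℝ) : ℝ :=
  ∑ k ∈ Finset.range N,
    u (Function.invFun F (y + k)) / |deriv F (Function.invFun F (y + k))|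

/-- Property (T): `T` is (the lift of) a C² `N`-fold covering expanding circle map with
`min |T'| = ω > 1`, `T''` Lipschitz, `N < ω²`. -/
def PropT (T : ℝ → ℝ) (N : ℕ) (ω : ℝ) : Prop :=
  ContDiff ℝ 2 T ∧
  ((∀ x, T (x + 1) = T x + N) ∨ (∀ x, T (x + 1) = T x - N)) ∧
  (∀ x, ω ≤ |deriv T x|) ∧ 1 < ω ∧
  (∃ L : ℝ, ∀ x y, |deriv (deriv T) x - deriv (deriv T) y| ≤ L * |x - y|) ∧
  (N : ℝ) < ω ^ 2

/-- The self-consistent transfer operator `F_ε(f) = P_{T ∘ Φ_f} f`. -/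
noncomputable def Feps (T : ℝ → ℝ) (N : ℕ) (ε : ℝ) (f : ℝ → ℝ) : ℝ → ℝ :=
  transfer (T ∘ Phi ε f) N f

/-- The class `C_{R,S}^c` of densities. -/
def CRSc (R S c : ℝ) : Set (ℝ → ℝ) :=
  {f | PropF f ∧ tvar f ≤ R ∧ (∀ x, |deriv f x| ≤ S) ∧
    ∀ x y, |deriv f x - deriv f y| ≤ c * |x - y|}

/-- Property (F'): `f` satisfies (F), has Lipschitz derivative, and its support avoids
(an interval of length `1/2` on the circle, i.e.) all integer translates of some `[a, a+1/2]`. -/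
def PropF' (f : ℝ → ℝ) : Prop :=
  PropF f ∧ LipDeriv f ∧
    ∃ a : ℝ, ∀ x, f x ≠ 0 → ∀ k : ℤ, x + (k : ℝ) ∉ Set.Icc a (a + 1/2)

/-- The length of the minimal closed arc of the circle containing the support of `f`. -/
noncomputable def suppLen (f : ℝ → ℝ) : ℝ :=
  sInf {L | 0 ≤ L ∧ ∃ a : ℝ, ∀ x, f x ≠ 0 → ∃ k : ℤ, x + (k : ℝ) ∈ Set.Icc a (a + L)}

/-- Wasserstein-1 distance between the measure `f dλ` on the circle and the point mass `δ_y`,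
via Kantorovich–Rubinstein duality (1-Lipschitz periodic test functions). -/
noncomputable def W1delta (f : ℝ → ℝ) (y : ℝ) : ℝ :=
  ⨆ ℓ : {ℓ : ℝ → ℝ // LipschitzWith 1 ℓ ∧ Function.Periodic ℓ 1},
    |(∫ x in (0:ℝ)..1, ℓ.1 x * f x) - ℓ.1 y|

/-- BV norm for (not necessarily C¹) functions of bounded variation. -/
noncomputable def bvBV (u : ℝ → ℝ) : ℝ :=
  l1 u + (eVariationOn u (Set.Icc (0:ℝ) 1)).toReal

-- basic saw lemmas
lemma saw_periodic : Function.Periodic saw 1 := by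
  intro u
  unfold saw
  have h1 : Int.fract (u + 1 + 1/2) = Int.fract (u + 1/2) := by
    rw [show u + 1 + 1/2 = u + 1/2 + 1 by ring, Int.fract_add_one]
  have h2 : round (u + 1) = round u + 1 := by
    rw [show (u:ℝ) + 1 = u + (1:ℤ) by norm_num, round_add_intCast]
  rw [h1, h2]
  split
  · rfl
  · push_cast; ring

lemma saw_eq_self {u : ℝ} (h1 : -(1/2) < u) (h2 : u < 1/2) : saw u = u := by
  unfold saw
  have hfr : Int.fract (u + 1/2) = u + 1/2 := by
    rw [Int.fract_eq_self]
    constructor <;> linarith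
  have hfr0 : ¬ Int.fract (u + 1/2) = 0 := by rw [hfr]; intro h; linarith
  rw [if_neg hfr0]
  have : round u = 0 := by
    rw [round_eq]
    norm_num
    constructor <;> linarith
  rw [this]; simp

lemma saw_abs_le (u : ℝ) : |saw u| ≤ 1/2 := by
  unfold saw
  split
  · norm_num
  · exact abs_sub_round u

noncomputable def Bfun (f : ℝ → ℝ) (t : ℝ) : ℝ := ∫ y in (0:ℝ)..t, y * f y

lemma Phi_eq (ε : ℝ) (f : ℝ → ℝ) (hfc : Continuous f) (hper : Function.Periodic f 1) (x : ℝ) :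
    Phi ε f x = x + ε * ∫ y in (x - 1/2)..(x + 1/2), (y - x) * f y := by
  unfold Phi
  have hp : Function.Periodic (fun y => saw (y - x) * f y) 1 := by
    intro y
    simp only
    rw [show y + 1 - x = (y - x) + 1 by ring, saw_periodic (y - x), hper y]
  have e1 : (∫ y in (0:ℝ)..1, saw (y - x) * f y)
      = ∫ y in (x - 1/2)..(x + 1/2), saw (y - x) * f y := by
    have h := hp.intervalIntegral_add_eq (x - 1/2) 0
    rw [show x - 1/2 + 1 = x + 1/2 by ring, zero_add] at h
    exact h.symm
  rw [e1]
  have e2 : (∫ y in (x - 1/2)..(x + 1/2), saw (y - x) * f y)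
      = ∫ y in (x - 1/2)..(x + 1/2), (y - x) * f y := by
    apply intervalIntegral.integral_congr_ae
    have h1 : ∀ᵐ y : ℝ, y ≠ x + 1/2 := by
      have : volume ({x + 1/2} : Set ℝ) = 0 := measure_singleton _
      simpa [MeasureTheory.ae_iff] using this
    filter_upwards [h1] with y hy hyI
    rw [Set.uIoc_of_le (by linarith : x - 1/2 ≤ x + 1/2)] at hyI
    have h2 : x - 1/2 < y := hyI.1
    have h3 : y ≤ x + 1/2 := hyI.2
    have h4 : y < x + 1/2 := lt_of_le_of_ne h3 hy
    rw [saw_eq_self (by linarith) (by linarith)]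
  rw [e2]

lemma Bfun_hasDerivAt (f : ℝ → ℝ) (hfc : Continuous f) (t : ℝ) :
    HasDerivAt (Bfun f) (t * f t) t := by
  have hc : Continuous fun y : ℝ => y * f y := continuous_id.mul hfc
  exact intervalIntegral.integral_hasDerivAt_right (hc.intervalIntegrable _ _)
    (hc.stronglyMeasurableAtFilter _ _) hc.continuousAt

lemma f_int_one (f : ℝ → ℝ) (hper : Function.Periodic f 1)
    (hone : (∫ x in (0:ℝ)..1, f x) = 1) (x : ℝ) :
    (∫ y in (x - 1/2)..(x + 1/2), f y) = 1 := by
  have h := hper.intervalIntegral_add_eq (x - 1/2) 0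
  rw [show x - 1/2 + 1 = x + 1/2 by ring, zero_add] at h
  rw [h, hone]

lemma Phi_eq2 (ε : ℝ) (f : ℝ → ℝ) (hfc : Continuous f) (hper : Function.Periodic f 1)
    (hone : (∫ x in (0:ℝ)..1, f x) = 1) (x : ℝ) :
    Phi ε f x = (1 - ε) * x + ε * (Bfun f (x + 1/2) - Bfun f (x - 1/2)) := by
  rw [Phi_eq ε f hfc hper x]
  have hc : Continuous fun y : ℝ => y * f y := continuous_id.mul hfc
  have hsplit : (∫ y in (x - 1/2)..(x + 1/2), (y - x) * f y)
      = (∫ y in (x - 1/2)..(x + 1/2), y * f y) - x * ∫ y in (x - 1/2)..(x + 1/2), f y := by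
    rw [← intervalIntegral.integral_const_mul,
      ← intervalIntegral.integral_sub (hc.intervalIntegrable _ _)
        ((hfc.intervalIntegrable _ _).const_mul x)]
    congr 1; ext y; ring
  have hB : (∫ y in (x - 1/2)..(x + 1/2), y * f y) = Bfun f (x + 1/2) - Bfun f (x - 1/2) := by
    unfold Bfun
    rw [← intervalIntegral.integral_add_adjacent_intervals (hc.intervalIntegrable 0 (x - 1/2))
      (hc.intervalIntegrable (x - 1/2) (x + 1/2))]
    ring
  rw [hsplit, hB, f_int_one f hper hone x]
  ring


set_option maxHeartbeats 1000000 in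
/-- if `f` is a C¹ probability density with Lipschitz derivative and
`0 ≤ ε < 1`, then `Φ_f` is a C² diffeomorphism of the circle: its lift is C²,
bijective, commutes with `x ↦ x + 1`, and has a C² inverse. -/
theorem coupling_C2_diffeo (ε : ℝ) (hε0 : 0 ≤ ε) (hε1 : ε < 1)
    (f : ℝ → ℝ) (hf : PropF f) (hlip : LipDeriv f) :
    ContDiff ℝ 2 (Phi ε f) ∧
    (∀ x, Phi ε f (x + 1) = Phi ε f x + 1) ∧
    Function.Bijective (Phi ε f) ∧
    ContDiff ℝ 2 (Function.invFun (Phi ε f)) := by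
  obtain ⟨hC1, hper, hpos0, hone⟩ := hf
  have hfc : Continuous f := hC1.continuous
  -- B is C²
  have hBd : ∀ t, HasDerivAt (Bfun f) (t * f t) t := Bfun_hasDerivAt f hfc
  have hB2 : ContDiff ℝ 2 (Bfun f) := by
    rw [show (2 : WithTop ℕ∞) = 1 + 1 by norm_num, contDiff_succ_iff_deriv]
    refine ⟨fun t => (hBd t).differentiableAt, by simp, ?_⟩
    have : deriv (Bfun f) = fun t => t * f t := funext fun t => (hBd t).deriv
    rw [this]
    exact contDiff_id.mul hC1
  have hPhifun : Phi ε f = fun x => (1 - ε) * x + ε * (Bfun f (x + 1/2) - Bfun f (x - 1/2)) :=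
    funext (Phi_eq2 ε f hfc hper hone)
  -- C²
  have hPhiC2 : ContDiff ℝ 2 (Phi ε f) := by
    rw [hPhifun]
    exact (contDiff_const.mul contDiff_id).add (contDiff_const.mul
      ((hB2.comp (contDiff_id.add contDiff_const)).sub
        (hB2.comp (contDiff_id.sub contDiff_const))))
  -- derivative
  have hPhider : ∀ x, HasDerivAt (Phi ε f) (1 - ε + ε * f (x + 1/2)) x := by
    intro x
    rw [hPhifun]
    have h1 : HasDerivAt (fun x : ℝ => Bfun f (x + 1/2)) ((x + 1/2) * f (x + 1/2)) x := by
      exact (hBd (x + 1/2)).comp_add_const x (1/2)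
    have h2 : HasDerivAt (fun x : ℝ => Bfun f (x - 1/2)) ((x - 1/2) * f (x - 1/2)) x := by
      exact (hBd (x - 1/2)).comp_sub_const x (1/2)
    have h3 := (((hasDerivAt_id x).const_mul (1 - ε)).add ((h1.sub h2).const_mul ε))
    refine h3.congr_deriv ?_
    have hfp : f (x - 1/2) = f (x + 1/2) := by
      have := hper (x - 1/2)
      rw [show x - 1/2 + 1 = x + 1/2 by ring] at this
      exact this.symm
    rw [hfp]; ring
  have hdpos : ∀ x, 0 < 1 - ε + ε * f (x + 1/2) := by
    intro x
    have : 0 ≤ ε * f (x + 1/2) := mul_nonneg hε0 (hpos0 _)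
    linarith
  have hmono : StrictMono (Phi ε f) := by
    apply strictMono_of_deriv_pos
    intro x
    rw [(hPhider x).deriv]
    exact hdpos x
  -- commutation
  have hcomm : ∀ x, Phi ε f (x + 1) = Phi ε f x + 1 := by
    intro x
    unfold Phi
    have : ∀ y, saw (y - (x + 1)) = saw (y - x) := by
      intro y
      rw [show y - (x + 1) = (y - x) - 1 by ring]
      exact saw_periodic.sub_eq (y - x)
    simp only [this]
    ring
  -- bound on displacement
  have hbnd : ∀ x, |Phi ε f x - x| ≤ 1/2 := by
    intro x
    rw [Phi_eq ε f hfc hper x]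
    have hJ : |∫ y in (x - 1/2)..(x + 1/2), (y - x) * f y| ≤ 1/2 := by
      have hc : Continuous fun y : ℝ => (y - x) * f y := (continuous_id.sub continuous_const).mul hfc
      have habs : |∫ y in (x - 1/2)..(x + 1/2), (y - x) * f y|
          ≤ ∫ y in (x - 1/2)..(x + 1/2), |(y - x) * f y| := by
        have h0 := intervalIntegral.norm_integral_le_integral_norm (μ := volume)
          (f := fun y => (y - x) * f y) (a := x - 1/2) (b := x + 1/2) (by linarith)
        simp only [Real.norm_eq_abs] at h0
        exact h0
      calc |∫ y in (x - 1/2)..(x + 1/2), (y - x) * f y|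
          ≤ ∫ y in (x - 1/2)..(x + 1/2), |(y - x) * f y| := habs
        _ ≤ ∫ y in (x - 1/2)..(x + 1/2), (1/2) * f y := by
            apply intervalIntegral.integral_mono_on (by linarith)
              (hc.abs.intervalIntegrable _ _) ((hfc.intervalIntegrable _ _).const_mul _)
            intro y hy
            rw [abs_mul, abs_of_nonneg (hpos0 y)]
            apply mul_le_mul_of_nonneg_right _ (hpos0 y)
            rw [abs_le]
            constructor
            · have := hy.1; linarith
            · have := hy.2; linarith
        _ = 1/2 := by
            rw [intervalIntegral.integral_const_mul, f_int_one f hper hone x]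
            ring
    have : |ε * ∫ y in (x - 1/2)..(x + 1/2), (y - x) * f y| ≤ 1/2 := by
      rw [abs_mul, abs_of_nonneg hε0]
      calc ε * |∫ y in (x - 1/2)..(x + 1/2), (y - x) * f y| ≤ 1 * (1/2) := by
            apply mul_le_mul hε1.le hJ (abs_nonneg _) zero_le_one
        _ = 1/2 := by ring
    simpa using this
  -- surjectivity
  have hsurj : Function.Surjective (Phi ε f) := by
    apply hPhiC2.continuous.surjective
    · apply Filter.tendsto_atTop_mono (f := fun x : ℝ => x + -(1/2))
      · intro x
        have := (abs_le.1 (hbnd x)).1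
        linarith
      · exact Filter.tendsto_atTop_add_const_right _ _ Filter.tendsto_id
    · apply Filter.tendsto_atBot_mono (f := fun x : ℝ => x + 1/2)
      · intro x
        have := (abs_le.1 (hbnd x)).2
        linarith
      · exact Filter.tendsto_atBot_add_const_right _ _ Filter.tendsto_id
  refine ⟨hPhiC2, hcomm, ⟨hmono.injective, hsurj⟩, ?_⟩
  -- C² inverse
  rw [contDiff_iff_contDiffAt]
  intro y
  set x := Function.invFun (Phi ε f) y with hxdef
  have hx : Phi ε f x = y := Function.invFun_eq (hsurj y)
  have hdne : (1 - ε + ε * f (x + 1/2)) ≠ 0 := ne_of_gt (hdpos x)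
  have hfd : HasFDerivAt (Phi ε f)
      ((ContinuousLinearEquiv.unitsEquivAut ℝ (Units.mk0 _ hdne)) : ℝ →L[ℝ] ℝ) x :=
    (hPhider x).hasFDerivAt_equiv hdne
  have hca : ContDiffAt ℝ 2 (Phi ε f) x := hPhiC2.contDiffAt
  have h12 : (2 : WithTop ℕ∞) ≠ 0 := by norm_num
  have hinv := hca.to_localInverse hfd h12
  rw [hx] at hinv
  apply hinv.congr_of_eventuallyEq
  have hev := (hca.hasStrictFDerivAt' hfd h12).eventually_right_inverse
  rw [hx] at hev
  filter_upwards [hev] with z hz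
  apply hmono.injective
  rw [Function.invFun_eq (hsurj z)]
  exact hz.symm
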